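/- Let Ω be the set of finite subsets of X, D_s F(ω) = F(ω ∪ {s}) − F(ω), and for a process u : Ω × X → ℝ define the operator Δ on products by Δ_{s_0} ⋯ Δ_{s_j} ∏_{p=0}^{n} u_{s_p} = Σ over families (Θ_0, …, Θ_n) with Θ_0 ∪ ⋯ ∪ Θ_n = {s_0, …, s_j} and s_p ∉ Θ_p for 0 ≤ p ≤ j, of ∏_{p=0}^{n} D_{Θ_p} u_{s_p}. Then for pairwise distinct s_0, …, s_n and 0 ≤ j ≤ n, one has ∏_{p=0}^{n} (ε⁺_{S_j \ {s_p}} u_{s_p}) = ( ∏_{i=0}^{j} (I + Δ_{s_i}) ) ∏_{p=0}^{n} u_{s_p}, where S_j = {s_0, …, s_j} and ε⁺_A F(ω) = F(ω ∪ A). -/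

import Mathlib

open Finset


/-- `DD Θ F ω` is the iterated finite difference `(∏_{s ∈ Θ} D_s) F` at `ω`, where
`D_s F (ω) = F (ω ∪ {s}) - F ω`, in inclusion-exclusion closed form. -/
noncomputable def DD {X : Type*} [DecidableEq X] (Θ : Finset X) (F : Finset X → ℝ)
    (ω : Finset X) : ℝ :=
  ∑ A ∈ Θ.powerset, (-1 : ℝ) ^ (Θ.card - A.card) * F (ω ∪ A)

/-- `DeltaProd u s J ω` is `Δ_{s_i, i ∈ J} ∏_p u_{s_p}` evaluated at `ω`: the sum over
all families `(Θ_p)_p` of subsets (encoded by index sets) with `⋃_p Θ_p = {s_i : i ∈ J}`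
and `s_p ∉ Θ_p` for `p ∈ J`, of `∏_p D_{Θ_p} u_{s_p}`. -/
noncomputable def DeltaProd {X : Type*} [DecidableEq X] (u : Finset X → X → ℝ)
    {m : ℕ} (s : Fin m → X) (J : Finset (Fin m)) (ω : Finset X) : ℝ :=
  ∑ Θ ∈ (Finset.univ : Finset (Fin m → Finset (Fin m))).filter
      (fun Θ => Finset.univ.sup Θ = J ∧ ∀ p ∈ J, p ∉ Θ p),
    ∏ p : Fin m, DD ((Θ p).image s) (fun ω' => u ω' (s p)) ω

/-- For pairwise distinct `s_0, …, s_n` and `0 ≤ j ≤ n`, one has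
`∏_{p=0}^{n} ε⁺_{S_j \ {s_p}} u_{s_p} = (∏_{i=0}^{j} (I + Δ_{s_i})) ∏_{p=0}^{n} u_{s_p}`,
where `S_j = {s_0, …, s_j}` and the right-hand side is expanded as the sum of
`Δ`-monomials over subsets `J ⊆ {0, …, j}`. -/
lemma DD_insert {X : Type*} [DecidableEq X] {a : X} {A : Finset X} (ha : a ∉ A)
    (F : Finset X → ℝ) (ω : Finset X) :
    DD (insert a A) F ω = DD A (fun ω' => F (insert a ω')) ω - DD A F ω := by
  unfold DD
  have hinj : ∀ B ∈ A.powerset, ∀ C ∈ A.powerset, insert a B = insert a C → B = C := by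
    intro B hB C hC h
    have haB : a ∉ B := fun h' => ha (mem_powerset.1 hB h')
    have haC : a ∉ C := fun h' => ha (mem_powerset.1 hC h')
    rw [← erase_insert haB, ← erase_insert haC, h]
  have hdisj : Disjoint A.powerset (A.powerset.image (insert a)) := by
    rw [disjoint_left]
    intro B hB hB'
    obtain ⟨C, _, hC⟩ := mem_image.1 hB'
    exact ha (mem_powerset.1 hB (hC ▸ mem_insert_self a C))
  rw [powerset_insert, sum_union hdisj, sum_image hinj]
  have hcard : (insert a A).card = A.card + 1 := card_insert_of_notMem ha
  have h1 : ∑ B ∈ A.powerset, (-1:ℝ) ^ ((insert a A).card - B.card) * F (ω ∪ B)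
      = - ∑ B ∈ A.powerset, (-1:ℝ) ^ (A.card - B.card) * F (ω ∪ B) := by
    rw [← sum_neg_distrib]
    refine sum_congr rfl fun B hB => ?_
    have hle : B.card ≤ A.card := card_le_card (mem_powerset.1 hB)
    rw [hcard, Nat.succ_sub hle, pow_succ]
    ring
  have h2 : ∑ B ∈ A.powerset, (-1:ℝ) ^ ((insert a A).card - (insert a B).card) * F (ω ∪ insert a B)
      = ∑ B ∈ A.powerset, (-1:ℝ) ^ (A.card - B.card) * F (insert a (ω ∪ B)) := by
    refine sum_congr rfl fun B hB => ?_
    have haB : a ∉ B := fun h' => ha (mem_powerset.1 hB h')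
    rw [hcard, card_insert_of_notMem haB, Nat.succ_sub_succ, union_insert]
  rw [h1, h2, neg_add_eq_sub]

lemma sum_DD {X : Type*} [DecidableEq X] (T : Finset X) (F : Finset X → ℝ) (ω : Finset X) :
    ∑ A ∈ T.powerset, DD A F ω = F (ω ∪ T) := by
  induction T using Finset.induction_on generalizing F with
  | empty => simp [DD]
  | @insert a T ha ih =>
    have hinj : ∀ B ∈ T.powerset, ∀ C ∈ T.powerset, insert a B = insert a C → B = C := by
      intro B hB C hC h
      have haB : a ∉ B := fun h' => ha (mem_powerset.1 hB h')
      have haC : a ∉ C := fun h' => ha (mem_powerset.1 hC h')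
      rw [← erase_insert haB, ← erase_insert haC, h]
    have hdisj : Disjoint T.powerset (T.powerset.image (insert a)) := by
      rw [disjoint_left]
      intro B hB hB'
      obtain ⟨C, _, hC⟩ := mem_image.1 hB'
      exact ha (mem_powerset.1 hB (hC ▸ mem_insert_self a C))
    rw [powerset_insert, sum_union hdisj, sum_image hinj]
    have : ∑ A ∈ T.powerset, DD (insert a A) F ω
        = ∑ A ∈ T.powerset, (DD A (fun ω' => F (insert a ω')) ω - DD A F ω) := by
      refine sum_congr rfl fun A hA => ?_
      exact DD_insert (fun h' => ha (mem_powerset.1 hA h')) F ω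
    rw [this, sum_sub_distrib, ih, ih, union_insert]
    ring

lemma powerset_image_eq {X Y : Type*} [DecidableEq X] [DecidableEq Y] {s : X → Y}
    (hs : Function.Injective s) (T : Finset X) :
    T.powerset.image (Finset.image s) = (T.image s).powerset := by
  ext B
  simp only [mem_image, mem_powerset]
  constructor
  · rintro ⟨A, hA, rfl⟩
    exact image_subset_image hA
  · intro hB
    obtain ⟨A, hA, rfl⟩ := Finset.subset_image_iff.1 hB
    exact ⟨A, hA, rfl⟩

lemma sum_DD_image {X Y : Type*} [DecidableEq X] [DecidableEq Y] {s : X → Y}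
    (hs : Function.Injective s) (T : Finset X) (F : Finset Y → ℝ) (ω : Finset Y) :
    ∑ A ∈ T.powerset, DD (A.image s) F ω = F (ω ∪ T.image s) := by
  rw [← sum_DD (T.image s) F ω, ← powerset_image_eq hs,
    sum_image (fun B _ C _ h => Finset.image_injective hs h)]


theorem eps_product_eq_sum_DeltaProd (X : Type*) [DecidableEq X]
    (u : Finset X → X → ℝ) (n j : ℕ) (hj : j ≤ n)
    (s : Fin (n + 1) → X) (hs : Function.Injective s) :
    ∀ ω : Finset X,
      (∏ p : Fin (n + 1),
        u (ω ∪ ((Finset.image s (Finset.univ.filter fun i : Fin (n + 1) => (i : ℕ) ≤ j)).erase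
            (s p))) (s p))
        = ∑ J ∈ (Finset.univ.filter fun i : Fin (n + 1) => (i : ℕ) ≤ j).powerset,
            DeltaProd u s J ω := by
  intro ω
  set Sj := (Finset.univ.filter fun i : Fin (n + 1) => (i : ℕ) ≤ j) with hSj
  have key : ∑ J ∈ Sj.powerset, DeltaProd u s J ω
      = ∑ Θ ∈ Fintype.piFinset (fun p : Fin (n + 1) => (Sj.erase p).powerset),
          ∏ p : Fin (n + 1), DD ((Θ p).image s) (fun ω' => u ω' (s p)) ω := by
    rw [← Finset.sum_fiberwise_of_maps_to
      (g := fun Θ : Fin (n + 1) → Finset (Fin (n + 1)) => Finset.univ.sup Θ)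
      (t := Sj.powerset) ?_ (fun Θ => ∏ p, DD ((Θ p).image s) (fun ω' => u ω' (s p)) ω)]
    · refine sum_congr rfl fun J hJ => ?_
      unfold DeltaProd
      refine sum_congr ?_ fun _ _ => rfl
      ext Θ
      simp only [mem_filter, Fintype.mem_piFinset, mem_powerset, mem_univ, true_and]
      constructor
      · rintro ⟨h1, h2⟩
        have hJSj := mem_powerset.1 hJ
        refine ⟨fun p q hq => ?_, h1⟩
        have hqJ : q ∈ J := h1 ▸ (Finset.mem_sup.2 ⟨p, mem_univ p, hq⟩)
        exact mem_erase.2 ⟨fun hqp => h2 q hqJ (hqp ▸ hq), hJSj hqJ⟩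
      · rintro ⟨h1, h2⟩
        exact ⟨h2, fun p _ hp => (mem_erase.1 (h1 p hp)).1 rfl⟩
    · intro Θ hΘ
      rw [mem_powerset]
      exact Finset.sup_le fun p _ =>
        (mem_powerset.1 (Fintype.mem_piFinset.1 hΘ p)).trans (erase_subset p Sj)
  rw [key, ← Finset.prod_univ_sum (t := fun p : Fin (n + 1) => (Sj.erase p).powerset)
    (f := fun p A => DD (A.image s) (fun ω' => u ω' (s p)) ω)]
  refine prod_congr rfl fun p _ => ?_
  rw [sum_DD_image hs, image_erase hs]
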